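/- Let G be a monoid acting on a set X and let φ be a special filter on X with ⋂φ = {x_0}, and let τ_φ consist of all sets U⊆X such that for every g∈G with g•x_0∈U the preimage {x∈X : g•x∈U} belongs to φ. Then the pseudocharacter of τ_φ at x_0 equals the pseudocharacter of φ: the least cardinality of a family 𝒰 of τ_φ-open sets containing x_0 with ⋂𝒰 = {x_0} equals the least cardinality of a subfamily 𝓕⊆φ with ⋂𝓕 = {x_0}. -/

import Mathlib

open Topology Cardinal

universe u

/-- An injective transfinite sequence `(x_α)_{α<κ}` of points of a `G`-act `X` is *special*
(with least index `i₀`) if there is an enumeration `G = {g_α}_{α<κ}` of the monoid `G` such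
that for all `α < κ` and all `β, γ, δ < α`:
(1) if `g_β • x_{i₀} ≠ g_γ • x_{i₀}` then `g_β • x_α ≠ g_γ • x_α`, and
(2) if `g_β • x_{i₀} ≠ g_γ • x_δ` then `g_β • x_α ≠ g_γ • x_δ`. -/
def IsSpecialSeq (G : Type u) {X : Type u} [Monoid G] [MulAction G X] (κ : Cardinal.{u})
    (x : κ.ord.ToType → X) (i₀ : κ.ord.ToType) : Prop :=
  (∀ i, i₀ ≤ i) ∧ Function.Injective x ∧
  ∃ g : κ.ord.ToType → G, Function.Surjective g ∧
    ∀ α β γ δ : κ.ord.ToType, β < α → γ < α → δ < α →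
      (g β • x i₀ ≠ g γ • x i₀ → g β • x α ≠ g γ • x α) ∧
      (g β • x i₀ ≠ g γ • x δ → g β • x α ≠ g γ • x δ)

/-- A filter `φ` on a `G`-act `X` is *special* (with `⋂ φ = {x₀}`) if for some cardinal `κ`
there is a special sequence `(x_α)_{α<κ}` in `X` with first term `x₀` such that
`⋂ φ = {x₀}` and `{x₀} ∪ {x_β : α < β < κ} ∈ φ` for all `α < κ`. -/
def IsSpecialFilter (G : Type u) {X : Type u} [Monoid G] [MulAction G X]
    (φ : Filter X) (x₀ : X) : Prop :=
  ∃ (κ : Cardinal.{u}) (x : κ.ord.ToType → X) (i₀ : κ.ord.ToType),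
    IsSpecialSeq G κ x i₀ ∧ x i₀ = x₀ ∧ ⋂₀ φ.sets = {x₀} ∧
    ∀ α : κ.ord.ToType, insert x₀ (x '' Set.Ioi α) ∈ φ

/-- The topology `τ_φ`. -/
def tauPhi (G X : Type*) [Monoid G] [MulAction G X] (x₀ : X) (φ : Filter X) :
    TopologicalSpace X where
  IsOpen U := ∀ g : G, g • x₀ ∈ U → {x : X | g • x ∈ U} ∈ φ
  isOpen_univ := fun _ _ => Filter.univ_mem' fun _ => trivial
  isOpen_inter := fun U V hU hV g hg =>
    Filter.inter_mem (hU g hg.1) (hV g hg.2)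
  isOpen_sUnion := fun S hS g hg => by
    obtain ⟨t, htS, hgt⟩ := hg
    exact Filter.mem_of_superset (hS t htS g hgt) fun x hx => ⟨t, htS, hx⟩

section Aux

variable {G X : Type u} [Monoid G] [MulAction G X]

/-- The "cascade" of indices: the closure of the set of `η` with `g η • x i₀ = x i₀` under
the triggering relation: if `η` is in the cascade, `β ∈ S`, `η < β` and
`g γ • x i₀ = g η • x β`, then `γ` is in the cascade. -/
inductive SpecialCasc {O : Type u} [LT O] (g : O → G) (x : O → X) (i₀ : O) (S : Set O) :
    O → Prop
  | base (η : O) : g η • x i₀ = x i₀ → SpecialCasc g x i₀ S η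
  | step (η β γ : O) : SpecialCasc g x i₀ S η → β ∈ S → η < β →
      g γ • x i₀ = g η • x β → SpecialCasc g x i₀ S γ

/-- The basic open set associated to a member of the filter. -/
def specialOpen {O : Type u} [LT O] (g : O → G) (x : O → X) (i₀ : O) (S : Set O) : Set X :=
  insert (x i₀) {y | ∃ η β, SpecialCasc g x i₀ S η ∧ β ∈ S ∧ η < β ∧ g η • x β = y}

/-- Any representation of a point `y ≠ x i₀` of the special open set can be upgraded to a
"good" representation, one in which additionally `g η • x i₀ ≠ y`. -/
theorem specialCasc_good {O : Type u} [LT O] {g : O → G} {x : O → X} {i₀ : O} {S : Set O}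
    {y : X} (hy : y ≠ x i₀) {η : O} (hη : SpecialCasc g x i₀ S η) :
    ∀ {β : O}, β ∈ S → η < β → g η • x β = y →
      ∃ η' β', SpecialCasc g x i₀ S η' ∧ β' ∈ S ∧ η' < β' ∧ g η' • x β' = y ∧
        g η' • x i₀ ≠ y := by
  induction hη with
  | base η h =>
      intro β hβ hlt hval
      exact ⟨η, β, .base η h, hβ, hlt, hval, fun hc => hy (hc.symm.trans h)⟩
  | step η₀ β₀ γ h₀ hβ₀ hlt₀ htrig ih =>
      intro β hβ hlt hval
      by_cases hc : g γ • x i₀ = y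
      · exact ih hβ₀ hlt₀ (htrig.symm.trans hc)
      · exact ⟨γ, β, .step η₀ β₀ γ h₀ hβ₀ hlt₀ htrig, hβ, hlt, hval, hc⟩

end Aux

/-- If `φ` is a special filter on a `G`-act `X` with `⋂ φ = {x₀}`, then the
pseudocharacter of `τ_φ` at `x₀` equals the pseudocharacter of `φ`: the least cardinality
of a family `𝒰` of `τ_φ`-open sets containing `x₀` with `⋂ 𝒰 = {x₀}` equals the least
cardinality of a subfamily `𝓕 ⊆ φ` with `⋂ 𝓕 = {x₀}`. -/
theorem tauPhi_pseudocharacter_eq_of_specialFilter {G X : Type u} [Monoid G] [MulAction G X]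
    (φ : Filter X) (x₀ : X) (hφ : IsSpecialFilter G φ x₀) :
    sInf {c : Cardinal.{u} | ∃ 𝒰 : Set (Set X),
        (∀ U ∈ 𝒰, IsOpen[tauPhi G X x₀ φ] U ∧ x₀ ∈ U) ∧ ⋂₀ 𝒰 = {x₀} ∧ #𝒰 = c} =
      sInf {c : Cardinal.{u} | ∃ 𝓕 : Set (Set X),
        𝓕 ⊆ φ.sets ∧ ⋂₀ 𝓕 = {x₀} ∧ #𝓕 = c} := by
  classical
  obtain ⟨κ, x, i₀, ⟨hle, hinj, g, hgsurj, hspec⟩, hx0, hInt, htail⟩ := hφ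
  subst hx0
  -- uniqueness of the `β`-coordinate of a good representation
  have uniq : ∀ {y : X} {η β η' β' : κ.ord.ToType}, η < β → η' < β' →
      g η • x β = y → g η' • x β' = y → g η • x i₀ ≠ y → g η' • x i₀ ≠ y → β = β' := by
    intro y η β η' β' h1 h2 hv1 hv2 hg1 hg2
    rcases lt_trichotomy β β' with h | h | h
    · exfalso
      have h3 : g η' • x β' = g η • x β := hv2.trans hv1.symm
      have h5 := (hspec β' η' η β h2 (h1.trans h) h).2
      have h4 : g η' • x i₀ = g η • x β := by
        by_contra h6; exact (h5 h6) h3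
      exact hg2 (h4.trans hv1)
    · exact h
    · exfalso
      have h3 : g η • x β = g η' • x β' := hv1.trans hv2.symm
      have h5 := (hspec β η η' β' h1 (h2.trans h) h).2
      have h4 : g η • x i₀ = g η' • x β' := by
        by_contra h6; exact (h5 h6) h3
      exact hg1 (h4.trans hv2)
  -- key construction: from a filter subfamily to an open family of no bigger cardinality
  have key : ∀ 𝓕 : Set (Set X), 𝓕 ⊆ φ.sets → ⋂₀ 𝓕 = {x i₀} →
      ∃ 𝒰 : Set (Set X), (∀ U ∈ 𝒰, IsOpen[tauPhi G X (x i₀) φ] U ∧ x i₀ ∈ U) ∧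
        ⋂₀ 𝒰 = {x i₀} ∧ #𝒰 ≤ #𝓕 := by
    intro 𝓕 h𝓕 hI
    set u : Set X → Set X :=
      fun F => specialOpen g x i₀ {β | x β ∈ F ∧ i₀ < β} with hu
    refine ⟨u '' 𝓕, ?_, ?_, Cardinal.mk_image_le⟩
    · rintro U ⟨F, hF, rfl⟩
      constructor
      · -- openness of `u F`
        show ∀ h : G, h • x i₀ ∈ u F → {z : X | h • z ∈ u F} ∈ φ
        intro h hmem
        obtain ⟨η, rfl⟩ := hgsurj h
        have hcasc : SpecialCasc g x i₀ {β | x β ∈ F ∧ i₀ < β} η := by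
          rcases hmem with h1 | ⟨η', β', hc', hβ', hlt', hval'⟩
          · exact .base η h1
          · exact .step η' β' η hc' hβ' hlt' hval'.symm
        have hsub : F ∩ insert (x i₀) (x '' Set.Ioi η) ⊆ {z : X | g η • z ∈ u F} := by
          rintro z ⟨hzF, hz⟩
          rcases hz with rfl | ⟨β, hβ, rfl⟩
          · exact hmem
          · exact Set.mem_insert_iff.2 (Or.inr
              ⟨η, β, hcasc, ⟨hzF, lt_of_le_of_lt (hle η) hβ⟩, hβ, rfl⟩)
        exact Filter.mem_of_superset (Filter.inter_mem (h𝓕 hF) (htail η)) hsub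
      · exact Set.mem_insert _ _
    · apply Set.Subset.antisymm
      · intro y hy
        rw [Set.mem_sInter] at hy
        by_cases hne : y = x i₀
        · exact hne ▸ rfl
        · exfalso
          have good : ∀ F ∈ 𝓕, ∃ η β, SpecialCasc g x i₀ {β | x β ∈ F ∧ i₀ < β} η ∧
              (x β ∈ F ∧ i₀ < β) ∧ η < β ∧ g η • x β = y ∧ g η • x i₀ ≠ y := by
            intro F hF
            have hyF := hy (u F) ⟨F, hF, rfl⟩
            rcases hyF with h1 | ⟨η, β, hc, hβ, hlt, hval⟩
            · exact absurd h1 hne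
            · exact specialCasc_good hne hc hβ hlt hval
          by_cases hF0 : 𝓕.Nonempty
          · obtain ⟨F₀, hF₀⟩ := hF0
            obtain ⟨η₀, β₀, _, hβ₀, hlt₀, hval₀, hgood₀⟩ := good F₀ hF₀
            have hall : x β₀ ∈ ⋂₀ 𝓕 := by
              rw [Set.mem_sInter]
              intro F hF
              obtain ⟨η, β, _, hβ, hlt, hval, hgood⟩ := good F hF
              have hββ : β = β₀ := uniq hlt hlt₀ hval hval₀ hgood hgood₀
              exact hββ ▸ hβ.1
            rw [hI, Set.mem_singleton_iff] at hall
            exact (hβ₀.2).ne' (hinj hall)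
          · rw [Set.not_nonempty_iff_eq_empty] at hF0
            subst hF0
            rw [Set.sInter_empty] at hI
            have : y ∈ ({x i₀} : Set X) := hI ▸ Set.mem_univ y
            exact hne this
      · intro y hy
        rw [Set.mem_singleton_iff] at hy
        subst hy
        rw [Set.mem_sInter]
        rintro U ⟨F, hF, rfl⟩
        exact Set.mem_insert _ _
  apply le_antisymm
  · -- open pseudocharacter ≤ filter pseudocharacter
    refine le_csInf ⟨_, ⟨φ.sets, Set.Subset.rfl, hInt, rfl⟩⟩ ?_
    rintro c ⟨𝓕, h𝓕, hI, rfl⟩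
    obtain ⟨𝒰, h1, h2, h3⟩ := key 𝓕 h𝓕 hI
    exact le_trans (csInf_le' ⟨𝒰, h1, h2, rfl⟩) h3
  · -- filter pseudocharacter ≤ open pseudocharacter
    apply le_csInf
    · obtain ⟨𝒰, h1, h2, _⟩ := key φ.sets Set.Subset.rfl hInt
      exact ⟨#𝒰, 𝒰, h1, h2, rfl⟩
    · rintro c ⟨𝒰, h𝒰, hI, rfl⟩
      refine csInf_le' ⟨𝒰, fun U hU => ?_, hI, rfl⟩
      have h := (h𝒰 U hU).1 (1 : G) (by simpa using (h𝒰 U hU).2)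
      simpa using h
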